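/- (Stability bound for FTRL with linear losses) Let X ⊆ ℝ^N be compact convex, R twice continuously differentiable and strongly convex on X, η > 0, and L, l ∈ ℝ^N. Define x = argmin_{x∈X}(η⟨x, L⟩ + R(x)) and x' = argmin_{x∈X}(η⟨x, L + l⟩ + R(x)), assumed to lie in the interior of X. Then ⟨l, x⟩ − ⟨l, x'⟩ ≤ η·max_{y∈X} (‖l‖*_{∇²R(y)})², where ‖l‖*_{H} = √(⟨l, H^{−1} l⟩) denotes the dual local norm. -/

import Mathlib

open Finset Matrix

def dotN {N : ℕ} (a b : EuclideanSpace ℝ (Fin N)) : ℝ := ∑ i, a i * b i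

/-- The Hessian of `R` at `y` as an `N × N` matrix, via the second iterated derivative. -/
noncomputable def hessMat {N : ℕ} (R : EuclideanSpace ℝ (Fin N) → ℝ)
    (y : EuclideanSpace ℝ (Fin N)) : Matrix (Fin N) (Fin N) ℝ :=
  fun i j => iteratedFDeriv ℝ 2 R y ![EuclideanSpace.single i 1, EuclideanSpace.single j 1]

/-- The squared dual local norm `(‖l‖*_H)² = ⟨l, H⁻¹ l⟩`. -/
noncomputable def dualNormSq {N : ℕ} (H : Matrix (Fin N) (Fin N) ℝ) (l : Fin N → ℝ) : ℝ :=
  l ⬝ᵥ (H⁻¹ *ᵥ l)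

lemma cs_posdef {N : ℕ} {H : Matrix (Fin N) (Fin N) ℝ} (hH : H.PosDef)
    (u l : Fin N → ℝ) : (l ⬝ᵥ u)^2 ≤ (u ⬝ᵥ (H *ᵥ u)) * dualNormSq H l := by
  have hdet : IsUnit H.det := hH.det_pos.ne'.isUnit
  set w : Fin N → ℝ := H⁻¹ *ᵥ l with hw
  have hHT : Hᵀ = H := by
    have h1 : Hᴴ = H := hH.isHermitian
    simpa using h1
  have hHw : H *ᵥ w = l := by
    rw [hw, Matrix.mulVec_mulVec, Matrix.mul_nonsing_inv _ hdet, Matrix.one_mulVec]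
  have hwHu : ∀ z : Fin N → ℝ, w ⬝ᵥ (H *ᵥ z) = l ⬝ᵥ z := by
    intro z
    rw [Matrix.dotProduct_mulVec, ← Matrix.mulVec_transpose, hHT, hHw]
  have hkey : ∀ t : ℝ, 0 ≤ (w ⬝ᵥ (H *ᵥ w)) * (t * t) + (2 * (l ⬝ᵥ u)) * t + (u ⬝ᵥ (H *ᵥ u)) := by
    intro t
    have h0 := hH.posSemidef.dotProduct_mulVec_nonneg (u + t • w)
    have hst : star (u + t • w) = u + t • w := by simp
    rw [hst] at h0
    have hexp : (u + t • w) ⬝ᵥ (H *ᵥ (u + t • w)) =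
        (w ⬝ᵥ (H *ᵥ w)) * (t * t) + (2 * (l ⬝ᵥ u)) * t + (u ⬝ᵥ (H *ᵥ u)) := by
      rw [Matrix.mulVec_add, Matrix.mulVec_smul, add_dotProduct, smul_dotProduct,
        dotProduct_add, dotProduct_smul, dotProduct_add, dotProduct_smul]
      have h1 : u ⬝ᵥ (H *ᵥ w) = l ⬝ᵥ u := by rw [hHw, dotProduct_comm]
      have h2 : w ⬝ᵥ (H *ᵥ u) = l ⬝ᵥ u := hwHu u
      rw [h1, h2]; ring_nf
    linarith [hexp ▸ h0]
  have hd := discrim_le_zero hkey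
  rw [discrim] at hd
  have ha : w ⬝ᵥ (H *ᵥ w) = dualNormSq H l := by
    rw [hHw]; rw [dotProduct_comm]; rfl
  rw [ha] at hd
  nlinarith [hd]

lemma taylor_seg (F : EuclideanSpace ℝ (Fin N) → ℝ) (hF : ContDiff ℝ 2 F)
    (p q : EuclideanSpace ℝ (Fin N)) (h0 : fderiv ℝ F p = 0) :
    ∃ t ∈ Set.Ioo (0:ℝ) 1,
      F q - F p = (1/2) * fderiv ℝ (fderiv ℝ F) (p + t • (q - p)) (q - p) (q - p) := by
  set v : EuclideanSpace ℝ (Fin N) := q - p with hv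
  set γ : ℝ → EuclideanSpace ℝ (Fin N) := fun t => p + t • v with hγdef
  set g : ℝ → ℝ := fun t => F (γ t) with hgdef
  have hγ : ∀ t : ℝ, HasDerivAt γ v t := fun t => by
    simpa [hγdef] using ((hasDerivAt_id t).smul_const v).const_add p
  have hγC : ContDiff ℝ 2 γ := contDiff_const.add (contDiff_id.smul contDiff_const)
  have hgC : ContDiff ℝ 2 g := hF.comp hγC
  have hg' : ∀ t : ℝ, HasDerivAt g (fderiv ℝ F (γ t) v) t := fun t =>
    ((hF.differentiable two_ne_zero) (γ t)).hasFDerivAt.comp_hasDerivAt t (hγ t)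
  have hderivg : deriv g = fun t => fderiv ℝ F (γ t) v := funext fun t => (hg' t).deriv
  have hDF : ContDiff ℝ 1 (fderiv ℝ F) := hF.fderiv_right (le_refl 2)
  have hg'' : ∀ t : ℝ, HasDerivAt (deriv g) (fderiv ℝ (fderiv ℝ F) (γ t) v v) t := by
    intro t
    rw [hderivg]
    have h1 : HasDerivAt (fun s => fderiv ℝ F (γ s)) (fderiv ℝ (fderiv ℝ F) (γ t) v) t :=
      ((hDF.differentiable one_ne_zero) (γ t)).hasFDerivAt.comp_hasDerivAt t (hγ t)
    have h2 := h1.clm_apply (hasDerivAt_const t v)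
    simpa using h2
  have hUD : UniqueDiffOn ℝ (Set.Icc (0:ℝ) 1) := uniqueDiffOn_Icc one_pos
  have hIcc1 : ∀ s ∈ Set.Icc (0:ℝ) 1, iteratedDerivWithin 1 g (Set.Icc (0:ℝ) 1) s = deriv g s := by
    intro s hs
    rw [iteratedDerivWithin_one]
    exact ((hg' s).differentiableAt).derivWithin (hUD s hs)
  have hf : ContDiffOn ℝ 1 g (Set.Icc (0:ℝ) 1) := (hgC.of_le one_le_two).contDiffOn
  have hf' : DifferentiableOn ℝ (iteratedDerivWithin 1 g (Set.Icc (0:ℝ) 1)) (Set.Ioo (0:ℝ) 1) := by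
    exact DifferentiableOn.congr
      (fun s _ => ((hg'' s).differentiableAt).differentiableWithinAt)
      (fun s hs => hIcc1 s (Set.Ioo_subset_Icc_self hs))
  obtain ⟨c, hc, hcr⟩ := taylor_mean_remainder_lagrange (f := g) (x₀ := 0) (x := 1) (n := 1)
    zero_ne_one (by rw [Set.uIcc_of_le zero_le_one]; exact_mod_cast hf)
    (by rwa [Set.uIcc_of_le zero_le_one, Set.uIoo_of_le zero_le_one])
  rw [Set.uIoo_of_le zero_le_one] at hc
  rw [Set.uIcc_of_le zero_le_one] at hcr
  refine ⟨c, hc, ?_⟩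
  have htay : taylorWithinEval g 1 (Set.Icc (0:ℝ) 1) 0 1 = g 0 := by
    rw [taylor_within_apply]
    have h0' : iteratedDerivWithin 0 g (Set.Icc (0:ℝ) 1) 0 = g 0 := by
      simp [iteratedDerivWithin_zero]
    have h1' : iteratedDerivWithin 1 g (Set.Icc (0:ℝ) 1) 0 = 0 := by
      rw [hIcc1 0 (by norm_num), hderivg]
      show fderiv ℝ F (γ 0) v = 0
      have hγ0 : γ 0 = p := by simp [hγdef]
      rw [hγ0, h0]
      simp
    rw [Finset.sum_range_succ, Finset.sum_range_one, h0', h1']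
    simp
  have hit2 : iteratedDerivWithin 2 g (Set.Icc (0:ℝ) 1) c = fderiv ℝ (fderiv ℝ F) (γ c) v v := by
    have hcmem : c ∈ Set.Icc (0:ℝ) 1 := Set.Ioo_subset_Icc_self hc
    have : iteratedDerivWithin 2 g (Set.Icc (0:ℝ) 1) c
        = derivWithin (iteratedDerivWithin 1 g (Set.Icc (0:ℝ) 1)) (Set.Icc (0:ℝ) 1) c :=
      by rw [iteratedDerivWithin_succ]
    rw [this, derivWithin_congr hIcc1 (hIcc1 c hcmem),
      ((hg'' c).differentiableAt).derivWithin (hUD c hcmem), (hg'' c).deriv]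
  rw [htay, hit2] at hcr
  have hg1 : g 1 = F q := by simp [hgdef, hγdef, hv]
  have hg0 : g 0 = F p := by simp [hgdef, hγdef]
  rw [hg1, hg0] at hcr
  rw [hcr]
  have hγc : p + c • v = γ c := rfl
  rw [hγc]
  norm_num [Nat.factorial]
  ring

lemma esum {N : ℕ} (u : EuclideanSpace ℝ (Fin N)) :
    ∑ i, u i • EuclideanSpace.single i (1:ℝ) = u := by
  ext j
  have : (∑ i, u i • EuclideanSpace.single i (1:ℝ)) j
      = ∑ i, (u i • EuclideanSpace.single i (1:ℝ)) j := by
    rw [WithLp.ofLp_sum, Finset.sum_apply]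
  rw [this]
  simp [EuclideanSpace.single_apply]

lemma fderiv2_eq_hess {N : ℕ} (R : EuclideanSpace ℝ (Fin N) → ℝ)
    (y u w : EuclideanSpace ℝ (Fin N)) :
    fderiv ℝ (fderiv ℝ R) y u w = (u : Fin N → ℝ) ⬝ᵥ (hessMat R y *ᵥ (w : Fin N → ℝ)) := by
  set B := fderiv ℝ (fderiv ℝ R) y
  have hB : ∀ i j, hessMat R y i j
      = B (EuclideanSpace.single i 1) (EuclideanSpace.single j 1) := by
    intro i j
    rw [hessMat, iteratedFDeriv_two_apply]
    simp
    rfl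
  calc B u w = B (∑ i, u i • EuclideanSpace.single i (1:ℝ)) w := by rw [esum]
    _ = ∑ i, u i * B (EuclideanSpace.single i 1) w := by
        rw [map_sum, ContinuousLinearMap.sum_apply]
        exact Finset.sum_congr rfl fun i _ => by
          rw [_root_.map_smul, ContinuousLinearMap.smul_apply, smul_eq_mul]
    _ = ∑ i, u i * ∑ j, hessMat R y i j * w j := by
        refine Finset.sum_congr rfl fun i _ => ?_
        congr 1
        calc B (EuclideanSpace.single i 1) w
            = B (EuclideanSpace.single i 1) (∑ j, w j • EuclideanSpace.single j (1:ℝ)) := by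
              rw [esum]
          _ = ∑ j, hessMat R y i j * w j := by
              rw [map_sum]
              exact Finset.sum_congr rfl fun j _ => by
                rw [_root_.map_smul, smul_eq_mul, hB, mul_comm]
    _ = (u : Fin N → ℝ) ⬝ᵥ (hessMat R y *ᵥ (w : Fin N → ℝ)) := rfl

lemma fderiv2_add_clm {N : ℕ} (A : EuclideanSpace ℝ (Fin N) →L[ℝ] ℝ)
    (R : EuclideanSpace ℝ (Fin N) → ℝ) (hR : ContDiff ℝ 2 R)
    (y : EuclideanSpace ℝ (Fin N)) :
    fderiv ℝ (fderiv ℝ (fun z => A z + R z)) y = fderiv ℝ (fderiv ℝ R) y := by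
  have h1 : fderiv ℝ (fun z => A z + R z) = fun z => (A : _) + fderiv ℝ R z := by
    funext z
    rw [fderiv_fun_add (A.differentiableAt) ((hR.differentiable two_ne_zero) z), A.fderiv]
  rw [h1]
  exact fderiv_const_add (A : EuclideanSpace ℝ (Fin N) →L[ℝ] ℝ)

lemma hess_cont {N : ℕ} (R : EuclideanSpace ℝ (Fin N) → ℝ) (hR : ContDiff ℝ 2 R) :
    Continuous (fun y => hessMat R y) := by
  apply continuous_matrix
  intro i j
  exact (continuous_eval_const _).comp
    (hR.continuous_iteratedFDeriv le_rfl)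

lemma dual_cont {N : ℕ} (R : EuclideanSpace ℝ (Fin N) → ℝ) (hR : ContDiff ℝ 2 R)
    (X : Set (EuclideanSpace ℝ (Fin N))) (hpd : ∀ y ∈ X, (hessMat R y).PosDef)
    (l : Fin N → ℝ) :
    ContinuousOn (fun y => dualNormSq (hessMat R y) l) X := by
  have hHc := hess_cont R hR
  have key : ∀ y ∈ X, dualNormSq (hessMat R y) l
      = ((hessMat R y).det)⁻¹ * (l ⬝ᵥ ((hessMat R y).adjugate *ᵥ l)) := by
    intro y hy
    rw [dualNormSq, Matrix.inv_def, Ring.inverse_eq_inv', Matrix.smul_mulVec,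
      dotProduct_smul, smul_eq_mul]
  refine ContinuousOn.congr ?_ key
  apply ContinuousOn.mul
  · exact ContinuousOn.inv₀ (hHc.matrix_det.continuousOn)
      (fun y hy => (hpd y hy).det_pos.ne')
  · exact (Continuous.dotProduct continuous_const
      (Continuous.matrix_mulVec hHc.matrix_adjugate continuous_const)).continuousOn

/-- FTRL stability with linear losses: if `x` and `x'` are the FTRL iterates for cumulative
losses `L` and `L + l` respectively (both in the interior of `X`), then
`⟨l, x⟩ − ⟨l, x'⟩ ≤ η · max_{y ∈ X} (‖l‖*_{∇²R(y)})²`. -/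
theorem ftrl_stability {N : ℕ} (X : Set (EuclideanSpace ℝ (Fin N)))
    (hXcomp : IsCompact X) (hXconv : Convex ℝ X) (hXne : X.Nonempty)
    (R : EuclideanSpace ℝ (Fin N) → ℝ) (hR : ContDiff ℝ 2 R)
    (hRsc : ∃ m : ℝ, 0 < m ∧ StrongConvexOn X m R)
    (hRpd : ∀ y ∈ X, (hessMat R y).PosDef)
    (η : ℝ) (hη : 0 < η) (L l : EuclideanSpace ℝ (Fin N))
    (x x' : EuclideanSpace ℝ (Fin N))
    (hx : IsMinOn (fun z => η * dotN z L + R z) X x)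
    (hx' : IsMinOn (fun z => η * dotN z (L + l) + R z) X x')
    (hxint : x ∈ interior X) (hx'int : x' ∈ interior X) :
    dotN l x - dotN l x' ≤ η * sSup ((fun y => dualNormSq (hessMat R y) l) '' X) := by
  classical
  have hxX : x ∈ X := interior_subset hxint
  have hx'X : x' ∈ X := interior_subset hx'int
  set A₁ : EuclideanSpace ℝ (Fin N) →L[ℝ] ℝ := η • (innerSL ℝ L) with hA₁def
  set A₂ : EuclideanSpace ℝ (Fin N) →L[ℝ] ℝ := η • (innerSL ℝ (L + l)) with hA₂def
  have hA₁ : ∀ z, A₁ z = η * dotN z L := by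
    intro z
    simp only [hA₁def, ContinuousLinearMap.smul_apply, innerSL_apply_apply, smul_eq_mul,
      PiLp.inner_apply, RCLike.inner_apply, conj_trivial, dotN]
  have hA₂ : ∀ z, A₂ z = η * dotN z (L + l) := by
    intro z
    simp only [hA₂def, ContinuousLinearMap.smul_apply, innerSL_apply_apply, smul_eq_mul,
      PiLp.inner_apply, RCLike.inner_apply, conj_trivial, dotN]
  set F : EuclideanSpace ℝ (Fin N) → ℝ := fun z => A₁ z + R z with hFdef
  set G : EuclideanSpace ℝ (Fin N) → ℝ := fun z => A₂ z + R z with hGdef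
  have hFeq : (fun z => η * dotN z L + R z) = F := by
    funext z
    show η * dotN z L + R z = A₁ z + R z
    rw [hA₁ z]
  have hGeq : (fun z => η * dotN z (L + l) + R z) = G := by
    funext z
    show η * dotN z (L + l) + R z = A₂ z + R z
    rw [hA₂ z]
  have hFC : ContDiff ℝ 2 F := (A₁.contDiff).add hR
  have hGC : ContDiff ℝ 2 G := (A₂.contDiff).add hR
  rw [hFeq] at hx
  rw [hGeq] at hx'
  have hF0 : fderiv ℝ F x = 0 :=
    (hx.isLocalMin (mem_interior_iff_mem_nhds.mp hxint)).fderiv_eq_zero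
  have hG0 : fderiv ℝ G x' = 0 :=
    (hx'.isLocalMin (mem_interior_iff_mem_nhds.mp hx'int)).fderiv_eq_zero
  obtain ⟨t₁, ht₁, e₁⟩ := taylor_seg F hFC x x' hF0
  obtain ⟨t₂, ht₂, e₂⟩ := taylor_seg G hGC x' x hG0
  set ξ₁ : EuclideanSpace ℝ (Fin N) := x + t₁ • (x' - x) with hξ₁def
  set ξ₂ : EuclideanSpace ℝ (Fin N) := x' + t₂ • (x - x') with hξ₂def
  have hseg : ∀ (a b : EuclideanSpace ℝ (Fin N)), a ∈ X → b ∈ X → ∀ t : ℝ,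
      t ∈ Set.Ioo (0:ℝ) 1 → a + t • (b - a) ∈ X := by
    intro a b ha hb t ht
    have hrw : a + t • (b - a) = (1 - t) • a + t • b := by
      rw [smul_sub, sub_smul, one_smul]; abel
    rw [hrw]
    exact hXconv ha hb (by linarith [ht.2]) (le_of_lt ht.1) (by ring)
  have hξ₁X : ξ₁ ∈ X := hseg x x' hxX hx'X t₁ ht₁
  have hξ₂X : ξ₂ ∈ X := hseg x' x hx'X hxX t₂ ht₂
  set u : EuclideanSpace ℝ (Fin N) := x - x' with hudef
  set Q₁ : ℝ := (u : Fin N → ℝ) ⬝ᵥ (hessMat R ξ₁ *ᵥ (u : Fin N → ℝ)) with hQ₁def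
  set Q₂ : ℝ := (u : Fin N → ℝ) ⬝ᵥ (hessMat R ξ₂ *ᵥ (u : Fin N → ℝ)) with hQ₂def
  have hQ₁ : F x' - F x = (1/2) * Q₁ := by
    rw [e₁, fderiv2_add_clm A₁ R hR, fderiv2_eq_hess, hQ₁def]
    have hneg : ((x' - x : EuclideanSpace ℝ (Fin N)) : Fin N → ℝ) = -(u : Fin N → ℝ) := by
      funext i
      show x' i - x i = -(x i - x' i)
      ring
    rw [hneg, Matrix.mulVec_neg, neg_dotProduct, dotProduct_neg, neg_neg]
  have hQ₂ : G x - G x' = (1/2) * Q₂ := by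
    rw [e₂, fderiv2_add_clm A₂ R hR, fderiv2_eq_hess, hQ₂def]
  have hsum : η * (dotN l x - dotN l x') = (F x' - F x) + (G x - G x') := by
    have h1 : ∀ z, G z - F z = η * dotN l z := by
      intro z
      show (A₂ z + R z) - (A₁ z + R z) = η * dotN l z
      rw [hA₁ z, hA₂ z]
      have hdz : dotN z (L + l) = dotN z L + dotN z l := by
        rw [dotN, dotN, dotN, ← Finset.sum_add_distrib]
        refine Finset.sum_congr rfl fun i _ => ?_
        have : (L + l) i = L i + l i := rfl
        rw [this]; ring
      have hcz : dotN z l = dotN l z := by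
        rw [dotN, dotN]; exact Finset.sum_congr rfl fun i _ => mul_comm _ _
      rw [hdz, hcz]; ring
    have h2 := h1 x
    have h3 := h1 x'
    linarith [h2, h3]
  have hld : (l : Fin N → ℝ) ⬝ᵥ (u : Fin N → ℝ) = dotN l x - dotN l x' := by
    rw [dotN, dotN, ← Finset.sum_sub_distrib, dotProduct]
    refine Finset.sum_congr rfl fun i _ => ?_
    have : (u : Fin N → ℝ) i = x i - x' i := rfl
    rw [this]; ring
  set S : ℝ := sSup ((fun y => dualNormSq (hessMat R y) l) '' X) with hSdef
  have hbdd : BddAbove ((fun y => dualNormSq (hessMat R y) l) '' X) :=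
    hXcomp.bddAbove_image (dual_cont R hR X hRpd l)
  have hle : ∀ ξ ∈ X, dualNormSq (hessMat R ξ) l ≤ S :=
    fun ξ hξ => le_csSup hbdd ⟨ξ, hξ, rfl⟩
  have hdual0 : ∀ ξ ∈ X, 0 ≤ dualNormSq (hessMat R ξ) l := by
    intro ξ hξ
    have h := ((hRpd ξ hξ).inv.posSemidef).dotProduct_mulVec_nonneg (l : Fin N → ℝ)
    rw [star_trivial] at h
    exact h
  have hS0 : 0 ≤ S := le_trans (hdual0 x hxX) (hle x hxX)
  have hQnn : ∀ ξ, ξ ∈ X → 0 ≤ (u : Fin N → ℝ) ⬝ᵥ (hessMat R ξ *ᵥ (u : Fin N → ℝ)) := by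
    intro ξ hξ
    have h := (hRpd ξ hξ).posSemidef.dotProduct_mulVec_nonneg (u : Fin N → ℝ)
    rw [star_trivial] at h
    exact h
  have hcs₁ := cs_posdef (hRpd ξ₁ hξ₁X) (u : Fin N → ℝ) l
  have hcs₂ := cs_posdef (hRpd ξ₂ hξ₂X) (u : Fin N → ℝ) l
  rw [hld] at hcs₁ hcs₂
  set d : ℝ := dotN l x - dotN l x'
  have hb₁ : d^2 ≤ Q₁ * S := by
    refine le_trans hcs₁ (mul_le_mul_of_nonneg_left (hle ξ₁ hξ₁X) ?_)
    exact hQnn ξ₁ hξ₁X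
  have hb₂ : d^2 ≤ Q₂ * S := by
    refine le_trans hcs₂ (mul_le_mul_of_nonneg_left (hle ξ₂ hξ₂X) ?_)
    exact hQnn ξ₂ hξ₂X
  have hηd : η * d = (1/2) * Q₁ + (1/2) * Q₂ := by rw [hsum, hQ₁, hQ₂]
  clear_value d Q₁ Q₂ S
  show d ≤ η * S
  rcases le_or_gt d 0 with hd | hd
  · exact le_trans hd (mul_nonneg hη.le hS0)
  · have hdsq : d * d ≤ (η * S) * d := by
      have h4 : ((1/2)*Q₁ + (1/2)*Q₂) * S = (1/2)*(Q₁*S) + (1/2)*(Q₂*S) := by ring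
      have h5 : d^2 ≤ ((1/2)*Q₁ + (1/2)*Q₂)*S := by rw [h4]; linarith [hb₁, hb₂]
      rw [← hηd] at h5
      have h6 : (η*d)*S = (η*S)*d := by ring
      rw [h6] at h5
      calc d*d = d^2 := by ring
        _ ≤ _ := h5
    exact le_of_mul_le_mul_right hdsq hd
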